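/- Let λ be an infinite cardinal and κ an infinite cardinal with λ^{<κ} = λ. Then there is no graph X on vertex set λ with no clique of size κ that weakly embeds every graph on λ with no clique of size κ. (Galvin's lemma) -/

import Mathlib

open Cardinal

namespace GalvinAux

universe u

variable {K V : Type u} [LinearOrder K]

/-- Sequences indexed by initial segments of `K` with values in `V`. -/
abbrev GW (K V : Type u) [LinearOrder K] := Σ δ : K, (Set.Iio δ → V)

/-- `t` is a proper end-extension of `s`. -/
def IsExt (s t : GW K V) : Prop :=
  s.1 < t.1 ∧ ∀ (β : K) (hβ : β < s.1) (hβ' : β < t.1), s.2 ⟨β, hβ⟩ = t.2 ⟨β, hβ'⟩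

/-- The values of `t` form a clique in `X`. -/
def Good (X : SimpleGraph V) (t : GW K V) : Prop :=
  ∀ β γ : Set.Iio t.1, β ≠ γ → X.Adj (t.2 β) (t.2 γ)

lemma snd_congr {w₁ w₂ : GW K V} (h : w₁ = w₂) (β : K) (h₁ : β < w₁.1) (h₂ : β < w₂.1) :
    w₁.2 ⟨β, h₁⟩ = w₂.2 ⟨β, h₂⟩ := by subst h; rfl

/-- Galvin's diagonal graph. -/
def YG (X : SimpleGraph V) : SimpleGraph (GW K V) where
  Adj s t := (IsExt s t ∧ Good X t) ∨ (IsExt t s ∧ Good X s)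
  symm := ⟨fun s t h => Or.symm h⟩
  loopless := ⟨fun s h => by
    rcases h with ⟨⟨h, _⟩, _⟩ | ⟨⟨h, _⟩, _⟩ <;> exact lt_irrefl _ h⟩

lemma claimA {X : SimpleGraph V} {kappa : Cardinal} (hk : ℵ₀ ≤ kappa)
    {S : Set (GW K V)} (hS : (YG X).IsClique S) (hcard : #S = kappa) :
    ∃ s : Set V, X.IsClique s ∧ #s = kappa := by
  classical
  have hadj : ∀ {s t : GW K V}, s ∈ S → t ∈ S → s ≠ t → (YG X).Adj s t :=
    fun hs ht hne => hS hs ht hne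
  -- lengths are distinct on S
  have hlen : ∀ {s t : GW K V}, s ∈ S → t ∈ S → s ≠ t → s.1 ≠ t.1 := by
    intro s t hs ht hne
    rcases hadj hs ht hne with ⟨⟨h, _⟩, _⟩ | ⟨⟨h, _⟩, _⟩
    · exact ne_of_lt h
    · exact (ne_of_lt h).symm
  set G' : Set (GW K V) :=
    {t | t ∈ S ∧ Good X t ∧ ∃ u ∈ S, Good X u ∧ IsExt t u} with hG'def
  set B : Set (GW K V) := {t | t ∈ S ∧ ¬ Good X t} with hBdef
  set M : Set (GW K V) := {t | t ∈ S ∧ Good X t ∧ ¬ ∃ u ∈ S, Good X u ∧ IsExt t u}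
    with hMdef
  have hB : B.Subsingleton := by
    intro s hs t ht
    by_contra hne
    rcases hadj hs.1 ht.1 hne with ⟨_, hg⟩ | ⟨_, hg⟩
    · exact ht.2 hg
    · exact hs.2 hg
  have hM : M.Subsingleton := by
    intro s hs t ht
    by_contra hne
    rcases hadj hs.1 ht.1 hne with ⟨he, hg⟩ | ⟨he, hg⟩
    · exact hs.2.2 ⟨t, ht.1, ht.2.1, he⟩
    · exact ht.2.2 ⟨s, hs.1, hs.2.1, he⟩
  have hsub : S ⊆ G' ∪ B ∪ M := by
    intro t ht
    by_cases hg : Good X t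
    · by_cases he : ∃ u ∈ S, Good X u ∧ IsExt t u
      · exact Or.inl (Or.inl ⟨ht, hg, he⟩)
      · exact Or.inr ⟨ht, hg, he⟩
    · exact Or.inl (Or.inr ⟨ht, hg⟩)
  have hG'card : kappa ≤ #G' := by
    by_contra hlt
    push_neg at hlt
    have h1 : #S ≤ #(G' ∪ B ∪ M : Set (GW K V)) := mk_le_mk_of_subset hsub
    have h2 : #(G' ∪ B ∪ M : Set (GW K V)) ≤ #G' + #B + #M :=
      le_trans (mk_union_le _ _) (add_le_add_left (mk_union_le _ _) _)
    have hBle : #B ≤ 1 := mk_le_one_iff_set_subsingleton.2 hB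
    have hMle : #M ≤ 1 := mk_le_one_iff_set_subsingleton.2 hM
    have hone : (1 : Cardinal) < kappa := lt_of_lt_of_le one_lt_aleph0 hk
    have : #S < kappa := by
      calc #S ≤ #G' + #B + #M := le_trans h1 h2
        _ ≤ #G' + 1 + 1 := by gcongr
        _ < kappa := add_lt_of_lt hk (add_lt_of_lt hk hlt hone) hone
    rw [hcard] at this
    exact lt_irrefl _ this
  -- choose extensions
  have hch : ∀ t : G', ∃ u, u ∈ S ∧ Good X u ∧ IsExt t.1 u := by
    rintro ⟨t, ht, hg, u, hu, hgu, he⟩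
    exact ⟨u, hu, hgu, he⟩
  choose u huS huG huE using hch
  have hιdef : ∀ t : G', (t : GW K V).1 < (u t).1 := fun t => (huE t).1
  set ι : G' → V := fun t => (u t).2 ⟨(t : GW K V).1, hιdef t⟩ with hιeq
  -- key adjacency
  have key : ∀ t₁ t₂ : G', (t₁ : GW K V).1 ≠ (t₂ : GW K V).1 → X.Adj (ι t₁) (ι t₂) := by
    intro t₁ t₂ hne
    by_cases hu12 : u t₁ = u t₂
    · have h1 : ι t₁ = (u t₂).2 ⟨(t₁ : GW K V).1, hu12 ▸ hιdef t₁⟩ := by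
        rw [hιeq]; exact snd_congr hu12 _ _ _
      rw [h1, hιeq]
      exact huG t₂ _ _ (fun h => hne (congrArg Subtype.val h))
    · have huadj := hadj (huS t₁) (huS t₂) hu12
      rcases huadj with ⟨he, hg⟩ | ⟨he, hg⟩
      · -- u t₁ extended by u t₂
        have h1 : ι t₁ = (u t₂).2 ⟨(t₁ : GW K V).1, lt_trans (hιdef t₁) he.1⟩ :=
          he.2 _ (hιdef t₁) _
        rw [h1, hιeq]
        exact hg _ _ (fun h => hne (congrArg Subtype.val h))
      · have h2 : ι t₂ = (u t₁).2 ⟨(t₂ : GW K V).1, lt_trans (hιdef t₂) he.1⟩ :=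
          he.2 _ (hιdef t₂) _
        rw [hιeq] at h2 ⊢
        rw [h2]
        exact (hg _ _ (fun h => hne.symm (congrArg Subtype.val h))).symm
  have hG'ne : ∀ t₁ t₂ : G', t₁ ≠ t₂ → (t₁ : GW K V).1 ≠ (t₂ : GW K V).1 := by
    intro t₁ t₂ hne
    exact hlen t₁.2.1 t₂.2.1 (fun h => hne (Subtype.ext h))
  have hι_inj : Function.Injective ι := by
    intro t₁ t₂ hval
    by_contra hne
    exact (key t₁ t₂ (hG'ne _ _ hne)).ne hval
  have hclique : X.IsClique (Set.range ι) := by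
    rintro _ ⟨t₁, rfl⟩ _ ⟨t₂, rfl⟩ hne
    have ht12 : t₁ ≠ t₂ := fun h => hne (by rw [h])
    exact key t₁ t₂ (hG'ne _ _ ht12)
  have hrange : kappa ≤ #(Set.range ι) := by
    rw [mk_range_eq ι hι_inj]; exact hG'card
  obtain ⟨p, hp, hpcard⟩ := le_mk_iff_exists_subset.1 hrange
  exact ⟨p, hclique.subset hp, hpcard⟩

variable [WellFoundedLT K]

/-- The diagonal sequence built from a weak embedding `F`. -/
noncomputable def gseq (F : GW K V → V) : K → V :=
  (wellFounded_lt (α := K)).fix fun δ IH => F ⟨δ, fun β => IH β.1 β.2⟩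

noncomputable def wseq (F : GW K V → V) (ξ : K) : GW K V :=
  ⟨ξ, fun β => gseq F β.1⟩

lemma gseq_eq (F : GW K V → V) (δ : K) : gseq F δ = F (wseq F δ) :=
  WellFounded.fix_eq _ _ _

lemma wseq_ext (F : GW K V → V) {η ξ : K} (h : η < ξ) : IsExt (wseq F η) (wseq F ξ) :=
  ⟨h, fun _ _ _ => rfl⟩

lemma wseq_good {X : SimpleGraph V} (F : GW K V → V)
    (hF : ∀ s t, (YG X).Adj s t → X.Adj (F s) (F t)) (ξ : K) :
    Good X (wseq F ξ) := by
  induction ξ using WellFoundedLT.induction with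
  | ind ξ IH =>
    have main : ∀ β γ : K, β < ξ → γ < ξ → β < γ → X.Adj (gseq F β) (gseq F γ) := by
      intro β γ hβ hγ hlt
      rw [gseq_eq, gseq_eq]
      exact hF _ _ (Or.inl ⟨wseq_ext F hlt, IH γ hγ⟩)
    intro β γ hne
    have hβγ : (β : K) ≠ (γ : K) := fun h => hne (Subtype.ext h)
    rcases lt_or_gt_of_ne hβγ with hlt | hlt
    · exact main β γ β.2 γ.2 hlt
    · exact (main γ β γ.2 β.2 hlt).symm

lemma claimB {X : SimpleGraph V} (F : GW K V → V)
    (hF : ∀ s t, (YG X).Adj s t → X.Adj (F s) (F t)) :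
    X.IsClique (Set.range (gseq F)) ∧ #(Set.range (gseq F)) = #K := by
  have hadj : ∀ {β γ : K}, β ≠ γ → X.Adj (gseq F β) (gseq F γ) := by
    intro β γ hne
    rcases lt_or_gt_of_ne hne with hlt | hlt
    · rw [gseq_eq, gseq_eq]
      exact hF _ _ (Or.inl ⟨wseq_ext F hlt, wseq_good F hF γ⟩)
    · rw [gseq_eq, gseq_eq]
      exact (hF _ _ (Or.inl ⟨wseq_ext F hlt, wseq_good F hF β⟩)).symm
  have hinj : Function.Injective (gseq F) := by
    intro β γ h
    by_contra hne
    exact (hadj hne).ne h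
  constructor
  · rintro _ ⟨β, rfl⟩ _ ⟨γ, rfl⟩ hne
    exact hadj (fun h => hne (by rw [h]))
  · exact mk_range_eq _ hinj

end GalvinAux

open GalvinAux in
/-- Galvin's lemma: if `λ^{<κ} = λ` (both infinite), there is no graph on a
vertex set of size `λ` with no clique of size `κ` that weakly embeds every
graph on that vertex set with no clique of size `κ`. -/
theorem stmt1 (lam kappa : Cardinal) (hlam : ℵ₀ ≤ lam) (hkappa : ℵ₀ ≤ kappa)
    (h : lam ^< kappa = lam) :
    ¬ ∃ X : SimpleGraph (Quotient.out lam),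
      (¬ ∃ s : Set (Quotient.out lam), X.IsClique s ∧ #s = kappa) ∧
      ∀ Y : SimpleGraph (Quotient.out lam),
        (¬ ∃ s : Set (Quotient.out lam), Y.IsClique s ∧ #s = kappa) →
        ∃ f : Quotient.out lam → Quotient.out lam, Function.Injective f ∧
          ∀ a b, Y.Adj a b → X.Adj (f a) (f b) := by
  classical
  rintro ⟨X, hX, hU⟩
  have hV : #(Quotient.out lam) = lam := mk_out lam
  -- kappa ≤ lam
  have hkl : kappa ≤ lam := by
    by_contra hlt
    push_neg at hlt
    have h1 : lam ^ lam ≤ lam ^< kappa := le_powerlt lam hlt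
    have h2 : (2 : Cardinal) ^ lam ≤ lam ^ lam := by
      apply power_le_power_right
      exact le_trans (by exact_mod_cast (nat_lt_aleph0 2).le) hlam
    have := lt_of_lt_of_le (cantor lam) (le_trans h2 (h1.trans_eq h))
    exact lt_irrefl _ this
  set K := kappa.ord.ToType with hKdef
  have hK : #K = kappa := mk_ord_toType kappa
  -- cardinality of GW K (Quotient.out lam)
  have hGW : #(GW K (Quotient.out lam)) = lam := by
    apply le_antisymm
    · rw [mk_sigma]
      have hle : ∀ δ : K, #(Set.Iio δ → Quotient.out lam) ≤ lam ^< kappa := by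
        intro δ
        rw [← power_def, hV]
        exact le_powerlt lam (mk_Iio_ord_toType δ)
      calc (sum fun δ : K => #(Set.Iio δ → Quotient.out lam)) ≤ sum fun _ : K => lam ^< kappa :=
            sum_le_sum _ _ hle
        _ = #K * (lam ^< kappa) := sum_const' K _
        _ = kappa * lam := by rw [hK, h]
        _ = max kappa lam := mul_eq_max hkappa hlam
        _ = lam := max_eq_right hkl
    · have : Nontrivial K := by
        rw [← one_lt_iff_nontrivial, hK]
        exact lt_of_lt_of_le one_lt_aleph0 hkappa
      obtain ⟨x, y, hxy⟩ := this
      rcases lt_or_gt_of_ne hxy with hlt | hlt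
      · exact hV.symm.le.trans (mk_le_of_injective
          (f := fun v : Quotient.out lam => (⟨y, fun _ => v⟩ : GW K (Quotient.out lam)))
          (fun v w hvw => congrFun (eq_of_heq (Sigma.mk.inj_iff.mp hvw).2) ⟨x, hlt⟩))
      · exact hV.symm.le.trans (mk_le_of_injective
          (f := fun v : Quotient.out lam => (⟨x, fun _ => v⟩ : GW K (Quotient.out lam)))
          (fun v w hvw => congrFun (eq_of_heq (Sigma.mk.inj_iff.mp hvw).2) ⟨y, hlt⟩))
  obtain ⟨e⟩ : Nonempty (GW K (Quotient.out lam) ≃ Quotient.out lam) := Cardinal.eq.mp (hGW.trans hV.symm)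
  set Y' : SimpleGraph (Quotient.out lam) :=
    { Adj := fun a b => (YG X).Adj (e.symm a) (e.symm b)
      symm := ⟨fun a b hab => hab.symm⟩
      loopless := ⟨fun a ha => (YG X).loopless.irrefl _ ha⟩ } with hY'def
  have hY'free : ¬ ∃ s : Set (Quotient.out lam), Y'.IsClique s ∧ #s = kappa := by
    rintro ⟨s, hs, hscard⟩
    have hSclique : (YG X).IsClique (e.symm '' s) := by
      rintro _ ⟨a, ha, rfl⟩ _ ⟨b, hb, rfl⟩ hne
      have hab : a ≠ b := fun hab => hne (by rw [hab])
      exact hs ha hb hab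
    have hScard : #(e.symm '' s) = kappa := by
      rw [mk_image_eq e.symm.injective]; exact hscard
    exact hX (claimA hkappa hSclique hScard)
  obtain ⟨f, hf_inj, hf⟩ := hU Y' hY'free
  set F : GW K (Quotient.out lam) → Quotient.out lam := fun w => f (e w) with hFdef
  have hFinj : Function.Injective F := hf_inj.comp e.injective
  have hFhom : ∀ s t : GW K (Quotient.out lam), (YG X).Adj s t → X.Adj (F s) (F t) := by
    intro s t hst
    apply hf
    show (YG X).Adj (e.symm (e s)) (e.symm (e t))
    simpa using hst
  obtain ⟨hclique, hcard⟩ := claimB F hFhom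
  exact hX ⟨Set.range (gseq F), hclique, by rw [hcard, hK]⟩
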